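/- Let {aₙ}ₙ≥₀ be a nonnegative sequence with a_{n+1} ≤ c₄aₙ + c₅a_{n-1} + c₆λ^{n-1} + c₇ for n ≥ 1, where c₄, c₅, c₆, c₇ > 0, 0 < λ < 1, and c₄ + c₅ < 1. Set ξ₁ = (√(c₄²+4c₅)+c₄)/2 and ξ₂ = (√(c₄²+4c₅)-c₄)/2. Then ξ₁ < 1 and a_{n+1} ≤ ξ₁ⁿ(a₁ + ξ₂a₀) + c₆·(max(λ,ξ₁))^{n-1}/(1 - min(λ/ξ₁, ξ₁/λ)) + c₇/(1-ξ₁), provided λ ≠ ξ₁. -/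
import Mathlib

lemma geom_sum_le_one_div (r : ℝ) (h0 : 0 ≤ r) (h1 : r < 1) (n : ℕ) :
    ∑ k ∈ Finset.range n, r ^ k ≤ 1 / (1 - r) := by
  have hr1 : (0:ℝ) < 1 - r := by linarith
  rw [geom_sum_eq h1.ne n]
  have hp0 : 0 ≤ r ^ n := pow_nonneg h0 n
  have hp1 : r ^ n ≤ 1 := pow_le_one₀ h0 h1.le
  have heq : (r ^ n - 1) / (r - 1) = (1 - r ^ n) / (1 - r) := by
    rw [div_eq_div_iff (by linarith) (by linarith)]; ring
  rw [heq]
  gcongr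
  · linarith

theorem discrete_gronwall_two_step_amb (a : ℕ → ℝ) (c₄ c₅ c₆ c₇ lam : ℝ)
    (ha : ∀ n, 0 ≤ a n)
    (hc₄ : 0 < c₄) (hc₅ : 0 < c₅) (hc₆ : 0 < c₆) (hc₇ : 0 < c₇)
    (hlam : 0 < lam) (hlam1 : lam < 1) (hsum : c₄ + c₅ < 1)
    (hrec : ∀ n ≥ 1, a (n + 1) ≤ c₄ * a n + c₅ * a (n - 1) + c₆ * lam ^ (n - 1) + c₇)
    (ξ₁ ξ₂ : ℝ)
    (hξ₁ : ξ₁ = (Real.sqrt (c₄ ^ 2 + 4 * c₅) + c₄) / 2)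
    (hξ₂ : ξ₂ = (Real.sqrt (c₄ ^ 2 + 4 * c₅) - c₄) / 2)
    (hne : lam ≠ ξ₁) :
    ξ₁ < 1 ∧
    ∀ n ≥ 1,
      a (n + 1) ≤ ξ₁ ^ n * (a 1 + ξ₂ * a 0)
        + c₆ * (max lam ξ₁) ^ (n - 1) / (1 - min (lam / ξ₁) (ξ₁ / lam))
        + c₇ / (1 - ξ₁) := by
  set s := Real.sqrt (c₄ ^ 2 + 4 * c₅) with hs
  have hs0 : 0 ≤ s := Real.sqrt_nonneg _
  have hs2 : s ^ 2 = c₄ ^ 2 + 4 * c₅ := Real.sq_sqrt (by positivity)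
  have hξ₁pos : 0 < ξ₁ := by rw [hξ₁]; nlinarith
  have hξ₂pos : 0 < ξ₂ := by rw [hξ₂]; nlinarith
  have hsum' : c₄ + ξ₂ = ξ₁ := by rw [hξ₁, hξ₂]; ring
  have hprod : ξ₁ * ξ₂ = c₅ := by rw [hξ₁, hξ₂]; nlinarith
  have hξ₁lt1 : ξ₁ < 1 := by rw [hξ₁]; nlinarith
  refine ⟨hξ₁lt1, ?_⟩
  -- one-step inequality for the auxiliary sequence b n = a n + ξ₂ a (n-1)
  have hb : ∀ n, 1 ≤ n →
      a (n+1) + ξ₂ * a n ≤ ξ₁ * (a n + ξ₂ * a (n-1)) + c₆ * lam ^ (n-1) + c₇ := by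
    intro n hn
    have h := hrec n hn
    have e : ξ₁ * (a n + ξ₂ * a (n-1)) = c₄ * a n + ξ₂ * a n + c₅ * a (n-1) := by
      linear_combination (-(a n)) * hsum' + (a (n-1)) * hprod
    linarith
  -- main induction
  have key : ∀ n, 1 ≤ n →
      a (n+1) + ξ₂ * a n ≤ ξ₁ ^ n * (a 1 + ξ₂ * a 0)
        + ∑ k ∈ Finset.range n, ξ₁ ^ k * (c₆ * lam ^ (n - 1 - k) + c₇) := by
    intro n hn
    induction n, hn using Nat.le_induction with
    | base =>
      have h := hb 1 le_rfl
      simp only [Finset.sum_range_one, pow_zero, pow_one, one_mul, Nat.sub_self,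
        Nat.sub_zero] at h ⊢
      linarith
    | succ n hn ih =>
      have h1 := hb (n+1) (by omega)
      simp only [Nat.add_sub_cancel] at h1
      have h2 : ξ₁ * (a (n+1) + ξ₂ * a n) ≤
          ξ₁ * (ξ₁ ^ n * (a 1 + ξ₂ * a 0)
            + ∑ k ∈ Finset.range n, ξ₁ ^ k * (c₆ * lam ^ (n - 1 - k) + c₇)) :=
        mul_le_mul_of_nonneg_left ih hξ₁pos.le
      have h3 : ∑ k ∈ Finset.range (n+1), ξ₁ ^ k * (c₆ * lam ^ (n + 1 - 1 - k) + c₇)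
          = ξ₁ * ∑ k ∈ Finset.range n, ξ₁ ^ k * (c₆ * lam ^ (n - 1 - k) + c₇)
            + (c₆ * lam ^ n + c₇) := by
        rw [Finset.sum_range_succ', Finset.mul_sum]
        simp only [pow_zero, one_mul, Nat.sub_zero, Nat.add_sub_cancel]
        congr 1
        refine Finset.sum_congr rfl fun k hk => ?_
        have he : n - (k + 1) = n - 1 - k := by omega
        rw [he]; ring
      have h4 : ξ₁ * (ξ₁ ^ n * (a 1 + ξ₂ * a 0)
            + ∑ k ∈ Finset.range n, ξ₁ ^ k * (c₆ * lam ^ (n - 1 - k) + c₇))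
          = ξ₁ ^ (n+1) * (a 1 + ξ₂ * a 0)
            + ξ₁ * ∑ k ∈ Finset.range n, ξ₁ ^ k * (c₆ * lam ^ (n - 1 - k) + c₇) := by
        ring
      rw [h3]
      linarith
  -- bound the sum
  intro n hn
  set r := min (lam / ξ₁) (ξ₁ / lam) with hrdef
  set M := max lam ξ₁ with hMdef
  have hr0 : 0 ≤ r := le_min (by positivity) (by positivity)
  have hr1 : r < 1 := by
    rcases lt_or_gt_of_ne hne with h | h
    · exact min_lt_of_left_lt ((div_lt_one hξ₁pos).2 h)
    · exact min_lt_of_right_lt ((div_lt_one hlam).2 h)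
  have hM0 : 0 < M := lt_max_iff.2 (Or.inl hlam)
  have hA : ∑ k ∈ Finset.range n, ξ₁ ^ k * lam ^ (n - 1 - k)
      ≤ M ^ (n-1) * (1 / (1 - r)) := by
    have key' : ∑ k ∈ Finset.range n, ξ₁ ^ k * lam ^ (n - 1 - k)
        = M ^ (n-1) * ∑ k ∈ Finset.range n, r ^ k := by
      rcases le_total lam ξ₁ with hc | hc
      · have hM : M = ξ₁ := max_eq_right hc
        have hrr : r = lam / ξ₁ :=
          min_eq_left (((div_le_one hξ₁pos).2 hc).trans ((one_le_div hlam).2 hc))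
        have hlam' : lam = r * ξ₁ := by
          rw [hrr]; field_simp
        rw [← Finset.sum_range_reflect (fun j => r ^ j) n, Finset.mul_sum]
        refine Finset.sum_congr rfl fun k hk => ?_
        have hk' : k < n := Finset.mem_range.mp hk
        have he : k + (n - 1 - k) = n - 1 := by omega
        calc ξ₁ ^ k * lam ^ (n - 1 - k)
            = ξ₁ ^ (k + (n - 1 - k)) * r ^ (n - 1 - k) := by
              rw [hlam', mul_pow, pow_add]; ring
          _ = M ^ (n-1) * r ^ (n - 1 - k) := by rw [he, hM]
      · have hM : M = lam := max_eq_left hc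
        have hrr : r = ξ₁ / lam :=
          min_eq_right (((div_le_one hlam).2 hc).trans ((one_le_div hξ₁pos).2 hc))
        have hξ' : ξ₁ = r * lam := by
          rw [hrr]; field_simp
        rw [Finset.mul_sum]
        refine Finset.sum_congr rfl fun k hk => ?_
        have hk' : k < n := Finset.mem_range.mp hk
        have he : k + (n - 1 - k) = n - 1 := by omega
        calc ξ₁ ^ k * lam ^ (n - 1 - k)
            = lam ^ (k + (n - 1 - k)) * r ^ k := by
              rw [hξ', mul_pow, pow_add]; ring
          _ = M ^ (n-1) * r ^ k := by rw [he, hM]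
    rw [key']
    exact mul_le_mul_of_nonneg_left (geom_sum_le_one_div r hr0 hr1 n)
      (pow_nonneg hM0.le _)
  have hB : ∑ k ∈ Finset.range n, ξ₁ ^ k ≤ 1 / (1 - ξ₁) :=
    geom_sum_le_one_div ξ₁ hξ₁pos.le hξ₁lt1 n
  have hsplit : ∑ k ∈ Finset.range n, ξ₁ ^ k * (c₆ * lam ^ (n - 1 - k) + c₇)
      = c₆ * (∑ k ∈ Finset.range n, ξ₁ ^ k * lam ^ (n - 1 - k))
        + c₇ * ∑ k ∈ Finset.range n, ξ₁ ^ k := by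
    rw [Finset.mul_sum, Finset.mul_sum, ← Finset.sum_add_distrib]
    exact Finset.sum_congr rfl fun k _ => by ring
  have hk := key n hn
  have hmono : a (n+1) ≤ a (n+1) + ξ₂ * a n := by
    nlinarith [ha n, ha (n+1)]
  have hfin : c₆ * (∑ k ∈ Finset.range n, ξ₁ ^ k * lam ^ (n - 1 - k))
        + c₇ * ∑ k ∈ Finset.range n, ξ₁ ^ k
      ≤ c₆ * (M ^ (n-1) * (1 / (1 - r))) + c₇ * (1 / (1 - ξ₁)) := by
    have := mul_le_mul_of_nonneg_left hA hc₆.le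
    have := mul_le_mul_of_nonneg_left hB hc₇.le
    linarith
  have heq1 : c₆ * (M ^ (n-1) * (1 / (1 - r))) = c₆ * M ^ (n-1) / (1 - r) := by ring
  have heq2 : c₇ * (1 / (1 - ξ₁)) = c₇ / (1 - ξ₁) := by ring
  linarith [hk, hsplit ▸ hk]
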